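/- Let f : ℝ → ℝ≥0∞ be measurable and suppose f z = 0 for all z ≤ 0 (the distribution is supported on the positive reals). Then (volume.withDensity f).map Real.log = volume.withDensity (fun z => f (Real.exp z) * ENNReal.ofReal (Real.exp z)); that is, if x has density f vanishing on nonpositive reals then log x has density z ↦ f(exp z)·exp z. -/

import Mathlib

open MeasureTheory Set
open scoped ENNReal

theorem density_of_log (f : ℝ → ℝ≥0∞) (hf : Measurable f)
    (hpos : ∀ z : ℝ, z ≤ 0 → f z = 0) :
    (volume.withDensity f).map Real.log =
      volume.withDensity
        (fun z => f (Real.exp z) * ENNReal.ofReal (Real.exp z)) := by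
  ext s hs
  rw [Measure.map_apply Real.measurable_log hs,
    withDensity_apply _ (Real.measurable_log hs),
    withDensity_apply _ hs]
  have himg : Real.exp '' s = Ioi 0 ∩ Real.log ⁻¹' s := by
    ext x
    constructor
    · rintro ⟨y, hy, rfl⟩
      exact ⟨Real.exp_pos y, by simpa [Real.log_exp] using hy⟩
    · rintro ⟨h2, h1⟩
      exact ⟨Real.log x, h1, Real.exp_log h2⟩
  have hind : f = (Ioi (0:ℝ)).indicator f := by
    ext x
    by_cases h : x ∈ Ioi (0:ℝ)
    · simp [h]
    · simp [h, hpos x (le_of_not_gt h)]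
  have step1 : ∫⁻ x in Real.log ⁻¹' s, f x = ∫⁻ x in Real.exp '' s, f x := by
    conv_lhs => rw [hind]
    rw [lintegral_indicator measurableSet_Ioi f,
      Measure.restrict_restrict measurableSet_Ioi, himg]
  have step2 : ∫⁻ x in Real.exp '' s, f x =
      ∫⁻ x in s, ENNReal.ofReal
        |(((1 : ℝ →L[ℝ] ℝ).smulRight (Real.exp x)).det)| * f (Real.exp x) := by
    exact lintegral_image_eq_lintegral_abs_det_fderiv_mul volume hs
      (fun x _ => (Real.hasDerivAt_exp x).hasFDerivAt.hasFDerivWithinAt)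
      Real.exp_injective.injOn f
  rw [step1, step2]
  apply setLIntegral_congr_fun hs
  intro x _
  dsimp only
  rw [ContinuousLinearMap.smulRight_one_eq_toSpanSingleton, ContinuousLinearMap.det_toSpanSingleton, abs_of_pos (Real.exp_pos x), mul_comm]
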